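/- Let ν ≥ 1/2 and 0 < B ≤ √(π/e) be real numbers, and set x₀ = π/B². If z > 0 satisfies 2z ≤ log x₀ − log log x₀ + (1/2)·(log log x₀)/(log x₀), then K_ν(z) ≥ e^{−z}·√(π/(2z)) ≥ B. (Sufficient condition on z to avoid underflow.) -/

import Mathlib

open Real MeasureTheory

/-- Modified Bessel function of the second kind, via its integral representation. -/
noncomputable def besselK (ν z : ℝ) : ℝ :=
  ∫ t in Set.Ioi (0 : ℝ), Real.exp (-z * Real.cosh t) * Real.cosh (ν * t)

lemma cosh_ge_half_exp (x : ℝ) : Real.exp x / 2 ≤ Real.cosh x := by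
  rw [Real.cosh_eq]
  have := (Real.exp_pos (-x)).le
  linarith

lemma cosh_le_exp_of_nonneg {x : ℝ} (hx : 0 ≤ x) : Real.cosh x ≤ Real.exp x := by
  rw [Real.cosh_eq]
  have : Real.exp (-x) ≤ Real.exp x := Real.exp_le_exp.2 (by linarith)
  linarith

lemma besselK_integrable {ν z : ℝ} (hν : 0 < ν) (hz : 0 < z) :
    IntegrableOn (fun t => Real.exp (-z * Real.cosh t) * Real.cosh (ν * t)) (Set.Ioi 0) := by
  apply integrable_of_isBigO_exp_neg (b := 1) one_pos
  · exact Continuous.continuousOn (by fun_prop)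
  · rw [Asymptotics.isBigO_iff]
    refine ⟨1, ?_⟩
    have h1 : Filter.Tendsto (fun t : ℝ => Real.exp t / t ^ 1) Filter.atTop Filter.atTop :=
      Real.tendsto_exp_div_pow_atTop 1
    filter_upwards [h1.eventually_ge_atTop (2 * (ν + 1) / z), Filter.eventually_gt_atTop 0]
      with t ht ht0
    have hcosh : 2 * (ν + 1) / z * t ≤ Real.exp t := by
      rw [le_div_iff₀ (by positivity)] at ht
      simpa [pow_one] using ht
    have hkey : (ν + 1) * t ≤ z * Real.cosh t := by
      have h2 : (ν + 1) * t ≤ z * (Real.exp t / 2) := by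
        rw [div_mul_eq_mul_div, div_le_iff₀ hz] at hcosh
        nlinarith
      exact h2.trans (by nlinarith [cosh_ge_half_exp t])
    have hc : Real.cosh (ν * t) ≤ Real.exp (ν * t) :=
      cosh_le_exp_of_nonneg (by positivity)
    rw [one_mul, Real.norm_eq_abs, Real.norm_eq_abs, Real.abs_exp,
      abs_of_nonneg (by positivity : (0:ℝ) ≤ Real.exp (-z * Real.cosh t) * Real.cosh (ν * t))]
    calc Real.exp (-z * Real.cosh t) * Real.cosh (ν * t)
        ≤ Real.exp (-z * Real.cosh t) * Real.exp (ν * t) :=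
          mul_le_mul_of_nonneg_left hc (Real.exp_pos _).le
      _ = Real.exp (-z * Real.cosh t + ν * t) := by rw [← Real.exp_add]
      _ ≤ Real.exp (-1 * t) := Real.exp_le_exp.2 (by nlinarith)

lemma sinh_half_image : (fun t : ℝ => Real.sinh (t / 2)) '' (Set.Ioi 0) = Set.Ioi 0 := by
  ext u
  constructor
  · rintro ⟨t, ht, rfl⟩
    exact Real.sinh_pos_iff.2 (by simp only [Set.mem_Ioi] at ht; positivity)
  · intro hu
    have h0 : 0 < Real.arsinh u := Real.arsinh_pos_iff.2 hu
    refine ⟨2 * Real.arsinh u, Set.mem_Ioi.2 (by positivity), ?_⟩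
    show Real.sinh (2 * Real.arsinh u / 2) = u
    rw [show 2 * Real.arsinh u / 2 = Real.arsinh u by ring, Real.sinh_arsinh]

lemma cosh_eq_via_half (t : ℝ) : Real.cosh t = 2 * Real.sinh (t / 2) ^ 2 + 1 := by
  have h1 := Real.cosh_two_mul (t / 2)
  have h2 := Real.cosh_sq (t / 2)
  rw [show 2 * (t / 2) = t by ring] at h1
  nlinarith

lemma besselK_half {z : ℝ} (hz : 0 < z) :
    besselK (1 / 2) z = Real.exp (-z) * Real.sqrt (π / (2 * z)) := by
  unfold besselK
  have hderiv : ∀ t ∈ Set.Ioi (0 : ℝ),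
      HasDerivWithinAt (fun t : ℝ => Real.sinh (t / 2)) (Real.cosh (t / 2) * (1 / 2))
        (Set.Ioi 0) t := fun t _ => by
    have h := ((Real.hasDerivAt_sinh (t / 2)).comp t
      ((hasDerivAt_id t).div_const 2)).hasDerivWithinAt (s := Set.Ioi 0)
    simpa [Function.comp_def] using h
  have hinj2 : Function.Injective fun t : ℝ => Real.sinh (t / 2) := by
    intro a b h
    have := Real.sinh_injective h
    linarith
  have key := integral_image_eq_integral_abs_deriv_smul measurableSet_Ioi hderiv hinj2.injOn
    (fun u => 2 * Real.exp (-z) * Real.exp (-(2 * z) * u ^ 2))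
  rw [sinh_half_image] at key
  have hRHS : (∫ t in Set.Ioi (0 : ℝ), |Real.cosh (t / 2) * (1 / 2)| •
      (2 * Real.exp (-z) * Real.exp (-(2 * z) * Real.sinh (t / 2) ^ 2)))
      = ∫ t in Set.Ioi (0 : ℝ), Real.exp (-z * Real.cosh t) * Real.cosh (1 / 2 * t) := by
    apply setIntegral_congr_fun measurableSet_Ioi
    intro t _
    dsimp only
    have hc : (0 : ℝ) < Real.cosh (t / 2) := Real.cosh_pos _
    rw [abs_of_pos (by positivity), smul_eq_mul,
      show -z * Real.cosh t = -z + -(2 * z) * Real.sinh (t / 2) ^ 2 by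
        rw [cosh_eq_via_half t]; ring,
      Real.exp_add, show (1 : ℝ) / 2 * t = t / 2 by ring]
    ring
  rw [hRHS] at key
  rw [← key, MeasureTheory.integral_const_mul, integral_gaussian_Ioi]
  ring

theorem underflow_sufficient (ν B : ℝ) (hν : 1 / 2 ≤ ν) (hB : 0 < B)
    (hB' : B ≤ Real.sqrt (π / Real.exp 1))
    (x₀ : ℝ) (hx₀ : x₀ = π / B ^ 2)
    (z : ℝ) (hz : 0 < z)
    (h1 : 2 * z ≤ Real.log x₀ - Real.log (Real.log x₀) +
        (1 / 2) * (Real.log (Real.log x₀) / Real.log x₀)) :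
    besselK ν z ≥ Real.exp (-z) * Real.sqrt (π / (2 * z)) ∧
      Real.exp (-z) * Real.sqrt (π / (2 * z)) ≥ B := by
  have hν0 : (0 : ℝ) < ν := lt_of_lt_of_le (by norm_num) hν
  constructor
  · -- besselK ν z ≥ besselK (1/2) z = closed form
    rw [← besselK_half hz]
    unfold besselK
    apply setIntegral_mono_on (besselK_integrable (by norm_num) hz)
      (besselK_integrable hν0 hz) measurableSet_Ioi
    intro t ht
    simp only [Set.mem_Ioi] at ht
    apply mul_le_mul_of_nonneg_left _ (Real.exp_pos _).le
    rw [Real.cosh_le_cosh, abs_of_nonneg (by positivity), abs_of_nonneg (by positivity)]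
    nlinarith
  · -- arithmetic part
    have hBsq : B ^ 2 ≤ π / Real.exp 1 := by
      have := Real.sq_sqrt (le_of_lt (div_pos Real.pi_pos (Real.exp_pos 1)))
      nlinarith [Real.sqrt_nonneg (π / Real.exp 1)]
    have hx₀e : Real.exp 1 ≤ x₀ := by
      rw [hx₀, le_div_iff₀ (by positivity)]
      calc Real.exp 1 * B ^ 2 ≤ Real.exp 1 * (π / Real.exp 1) := by
            exact mul_le_mul_of_nonneg_left hBsq (Real.exp_pos 1).le
        _ = π := by field_simp
    have hx₀pos : 0 < x₀ := lt_of_lt_of_le (Real.exp_pos 1) hx₀e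
    set L := Real.log x₀ with hL
    have hL1 : 1 ≤ L := by
      have := Real.log_le_log (Real.exp_pos 1) hx₀e
      rwa [Real.log_exp] at this
    set l := Real.log L with hl
    have hl0 : 0 ≤ l := Real.log_nonneg hL1
    have hlL : l ≤ L - 1 := Real.log_le_sub_one_of_pos (by linarith)
    have hexpL : Real.exp L = x₀ := Real.exp_log hx₀pos
    have hexpl : Real.exp l = L := Real.exp_log (by linarith)
    set f := L - l + 1 / 2 * (l / L) with hf
    have hzf : 2 * z ≤ f := h1
    have hf_pos : 0 < f := by
      have : 0 ≤ l / L := div_nonneg hl0 (by linarith)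
      have : l + 1 ≤ L := by linarith
      nlinarith
    -- key: f * exp f ≤ x₀
    have hkey : f * Real.exp f ≤ x₀ := by
      have hfd : f = (L - l) + 1 / 2 * (l / L) := by rw [hf]
      have hef : Real.exp f = Real.exp (L - l) * Real.exp (1 / 2 * (l / L)) := by
        rw [hfd, Real.exp_add]
      have heLl : Real.exp (L - l) = x₀ / L := by
        rw [Real.exp_sub, hexpL, hexpl]
      -- need : f * exp (l/(2L)) ≤ L
      have hmain : f * Real.exp (1 / 2 * (l / L)) ≤ L := by
        have hLpos : (0 : ℝ) < L := by linarith
        -- exp(-x) ≥ 1 - x, so f ≤ L * exp(-(l/(2L))) suffices; equivalently: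
        -- f * e^{l/(2L)} ≤ L ⟺ f ≤ L e^{-l/(2L)}
        have hexp_bound : 1 - 1 / 2 * (l / L) ≤ Real.exp (-(1 / 2 * (l / L))) := by
          have := Real.add_one_le_exp (-(1 / 2 * (l / L)))
          linarith
        have hLe : L - l / 2 ≤ L * Real.exp (-(1 / 2 * (l / L))) := by
          calc L - l / 2 = L * (1 - 1 / 2 * (l / L)) := by field_simp
            _ ≤ L * Real.exp (-(1 / 2 * (l / L))) :=
              mul_le_mul_of_nonneg_left hexp_bound (by linarith)
        have hfle : f ≤ L - l / 2 := by
          rw [hf]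
          have h1L : 1 / L ≤ 1 := by
            rw [div_le_one hLpos]; exact hL1
          have : l / L ≤ l := by
            rw [div_le_iff₀ hLpos]; nlinarith
          linarith
        have := hfle.trans hLe
        calc f * Real.exp (1 / 2 * (l / L))
            ≤ L * Real.exp (-(1 / 2 * (l / L))) * Real.exp (1 / 2 * (l / L)) :=
              mul_le_mul_of_nonneg_right this (Real.exp_pos _).le
          _ = L := by rw [mul_assoc, ← Real.exp_add]; simp
      calc f * Real.exp f = f * Real.exp (1 / 2 * (l / L)) * (x₀ / L) := by
            rw [hef, heLl]; ring
        _ ≤ L * (x₀ / L) := by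
            apply mul_le_mul_of_nonneg_right hmain
            positivity
        _ = x₀ := by field_simp
    have h2z : 2 * z * Real.exp (2 * z) ≤ x₀ := by
      calc 2 * z * Real.exp (2 * z) ≤ f * Real.exp f := by
            apply mul_le_mul hzf (Real.exp_le_exp.2 hzf) (Real.exp_pos _).le hf_pos.le
        _ ≤ x₀ := hkey
    -- conclude B ≤ e^{-z} √(π/(2z))
    have hB2 : B ^ 2 ≤ Real.exp (-z) ^ 2 * (π / (2 * z)) := by
      have hE : Real.exp (-z) ^ 2 = (Real.exp (2 * z))⁻¹ := by
        rw [sq, ← Real.exp_add, ← Real.exp_neg]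
        ring_nf
      rw [hE, hx₀] at *
      have h2zpos : (0 : ℝ) < 2 * z := by linarith
      have hEpos := Real.exp_pos (2 * z)
      rw [le_div_iff₀ (by positivity)] at h2z
      rw [inv_mul_eq_div, div_div, le_div_iff₀ (by positivity)]
      nlinarith
    have : B ≤ Real.exp (-z) * Real.sqrt (π / (2 * z)) := by
      have h1' : B = Real.sqrt (B ^ 2) := (Real.sqrt_sq hB.le).symm
      have h2' : Real.exp (-z) * Real.sqrt (π / (2 * z)) =
          Real.sqrt (Real.exp (-z) ^ 2 * (π / (2 * z))) := by
        rw [Real.sqrt_mul (by positivity), Real.sqrt_sq (Real.exp_pos _).le]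
      rw [h1', h2']
      exact Real.sqrt_le_sqrt hB2
    exact this
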